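/- Let R be a commutative Noetherian local ring and I an ideal of R generated by a regular sequence of length m. Then the projective dimension of R/I as an R-module equals m. -/

import Mathlib

open CategoryTheory

/-- `M` has a projective resolution of length at most `n`. -/
def HasProjDimLE (R : Type) [Ring R] (M : ModuleCat R) (n : ℕ) : Prop :=
  ∃ P : ProjectiveResolution M, ∀ i, n < i → Limits.IsZero (P.complex.X i)

/-- The projective dimension of `M` is exactly `n`. -/
def HasProjDimEq (R : Type) [Ring R] (M : ModuleCat R) (n : ℕ) : Prop :=
  HasProjDimLE R M n ∧ ∀ k, k < n → ¬ HasProjDimLE R M k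

open CategoryTheory Limits MonoidalCategory

section Cone
variable {R : Type} [CommRing R]

variable (K : ChainComplex (ModuleCat.{0} R) ℕ) (x : R)

/-- Degree-wise pieces of the cone of multiplication by `x`. -/
noncomputable def coneX : ℕ → ModuleCat.{0} R
  | 0 => K.X 0
  | (n+1) => ModuleCat.of R (K.X (n+1) × K.X n)

/-- Differentials of the cone. -/
noncomputable def coneD : ∀ n : ℕ, coneX K (n+1) ⟶ coneX K n
  | 0 => ModuleCat.ofHom ((K.d 1 0).hom ∘ₗ LinearMap.fst R (K.X 1) (K.X 0)
      + x • LinearMap.snd R (K.X 1) (K.X 0))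
  | (n+1) => ModuleCat.ofHom (LinearMap.prod
      ((K.d (n+2) (n+1)).hom ∘ₗ LinearMap.fst R (K.X (n+2)) (K.X (n+1))
        + (((-1:R)^(n+1)) * x) • LinearMap.snd R (K.X (n+2)) (K.X (n+1)))
      ((K.d (n+1) n).hom ∘ₗ LinearMap.snd R (K.X (n+2)) (K.X (n+1))))

lemma d_d_apply (i j k : ℕ) (p : K.X i) : K.d j k (K.d i j p) = 0 := by
  have h := K.d_comp_d i j k
  calc K.d j k (K.d i j p) = (K.d i j ≫ K.d j k) p := rfl
  _ = (0 : K.X i ⟶ K.X k) p := by rw [h]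
  _ = 0 := rfl

lemma coneD_sq (n : ℕ) : coneD K x (n+1) ≫ coneD K x n = 0 := by
  cases n with
  | zero =>
    apply ModuleCat.hom_ext
    apply LinearMap.ext
    rintro ⟨p, q⟩
    show K.d 1 0 (K.d 2 1 p + ((-1:R)^1 * x) • q) + x • (K.d 1 0 q) = 0
    rw [map_add, map_smul, d_d_apply]
    show (0:K.X 0) + ((-1:R)^1 * x) • K.d 1 0 q + x • K.d 1 0 q = 0
    module
  | succ n =>
    apply ModuleCat.hom_ext
    apply LinearMap.ext
    rintro ⟨p, q⟩
    refine Prod.ext ?_ ?_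
    · show K.d (n+2) (n+1) (K.d (n+3) (n+2) p + ((-1:R)^(n+2) * x) • q)
            + ((-1:R)^(n+1) * x) • (K.d (n+2) (n+1) q) = (0 : K.X (n+1))
      rw [map_add, map_smul, d_d_apply]
      have h : ((-1:R)^(n+2)) = -((-1:R)^(n+1)) := by ring
      rw [h]
      module
    · show K.d (n+1) n (K.d (n+2) (n+1) q) = (0 : K.X n)
      exact d_d_apply ..

/-- The mapping cone of multiplication by `x` on `K`. -/
noncomputable def cone : ChainComplex (ModuleCat.{0} R) ℕ :=
  ChainComplex.of (coneX K) (coneD K x) (coneD_sq K x)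

lemma cone_d (n : ℕ) : (cone K x).d (n+1) n = coneD K x n := ChainComplex.of_d _ _ n

end Cone

section Helpers
variable {R : Type} [CommRing R]

lemma eq_zero_of_isZero {M : ModuleCat R} (h : IsZero M) (z : M) : z = 0 := by
  have h1 : (𝟙 M : M ⟶ M) = 0 := (IsZero.iff_id_eq_zero M).1 h
  calc z = (𝟙 M : M ⟶ M) z := rfl
  _ = (0 : M ⟶ M) z := by rw [h1]
  _ = 0 := rfl

noncomputable def mkProjRes {C : Type*} [Category C] [Abelian C] [HasZeroObject C]
    {Z : C} (K : ChainComplex C ℕ) (hproj : ∀ n, Projective (K.X n))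
    (π0 : K.X 0 ⟶ Z) (hw : K.d 1 0 ≫ π0 = 0)
    (hexact0 : (ShortComplex.mk (K.d 1 0) π0 hw).Exact) (hepi : Epi π0)
    (hexact : ∀ n, K.ExactAt (n + 1)) : ProjectiveResolution Z where
  complex := K
  projective := hproj
  π := (ChainComplex.toSingle₀Equiv _ _).symm ⟨π0, hw⟩
  quasiIso := ⟨fun n => by
    cases n with
    | zero =>
      rw [ChainComplex.quasiIsoAt₀_iff, ShortComplex.quasiIso_iff_of_zeros']
      · refine (ShortComplex.exact_and_epi_g_iff_of_iso ?_).2 ⟨hexact0, hepi⟩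
        refine ShortComplex.isoMk (Iso.refl _) (Iso.refl _) (Iso.refl _) (by erw [Category.id_comp, Category.comp_id]; rfl) ?_
        · dsimp
          simp [ChainComplex.toSingle₀Equiv]
          erw [Category.id_comp, Category.comp_id]
      · exact K.shape 0 0 (by simp)
      all_goals rfl
    | succ n =>
      rw [quasiIsoAt_iff_exactAt']
      · apply hexact
      · apply ChainComplex.exactAt_succ_single_obj⟩

variable (R) [IsLocalRing R]

/-- A minimal free-ish resolution of `R ⧸ (xs)` with all the data we need. -/
structure GR (xs : List R) where
  K : ChainComplex (ModuleCat R) ℕ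
  proj : ∀ n, Projective (K.X n)
  ε : K.X 0 ⟶ ModuleCat.of R (R ⧸ Ideal.ofList xs)
  hw : K.d 1 0 ≫ ε = 0
  hsurj : Function.Surjective ε
  hker : ∀ z, ε z = 0 → ∃ u, K.d 1 0 u = z
  hexact : ∀ n (z : K.X (n+1)), K.d (n+1) n z = 0 → ∃ u, K.d (n+2) (n+1) u = z
  bound : ∀ i, xs.length < i → Limits.IsZero (K.X i)
  min : ∀ i, LinearMap.range (K.d (i+1) i).hom ≤
    ((IsLocalRing.maximalIdeal R) • ⊤ : Submodule R (K.X i))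
  top : Nonempty ((K.X xs.length) ≃ₗ[R] R)

variable {R}

noncomputable def GR.res {xs : List R} (G : GR R xs) :
    ProjectiveResolution (ModuleCat.of R (R ⧸ Ideal.ofList xs)) := by
  refine mkProjRes G.K G.proj G.ε G.hw ?_ ?_ ?_
  · rw [ShortComplex.moduleCat_exact_iff]
    exact G.hker
  · rw [ModuleCat.epi_iff_surjective]
    exact G.hsurj
  · intro n
    rw [HomologicalComplex.exactAt_iff' G.K (n+2) (n+1) n (by simp) (by simp),
      ShortComplex.moduleCat_exact_iff]
    exact G.hexact n


/-- The base complex : `R` in degree 0. -/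
noncomputable def baseK (R : Type) [CommRing R] : ChainComplex (ModuleCat.{0} R) ℕ :=
  ChainComplex.of
    (fun n => match n with | 0 => ModuleCat.of R R | _+1 => ModuleCat.of R PUnit)
    (fun _ => 0) (fun _ => by simp)

lemma baseK_d {R : Type} [CommRing R] (n : ℕ) : (baseK R).d (n+1) n = 0 := by
  unfold baseK; exact ChainComplex.of_d (fun n => match n with | 0 => ModuleCat.of R R | _+1 => ModuleCat.of R PUnit) (fun _ => 0) n

instance baseK_subsingleton {R : Type} [CommRing R] (n : ℕ) : Subsingleton ((baseK R).X (n+1)) := by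
  show Subsingleton PUnit
  infer_instance

/-- Base case: resolution of `R ⧸ (∅)`. -/
noncomputable def GR.nil (R : Type) [CommRing R] [IsLocalRing R] : GR R ([] : List R) where
  K := baseK R
  proj n := by
    match n with
    | 0 =>
      have : Module.Projective R R := inferInstance
      exact (IsProjective.iff_projective _).1 this
    | n+1 =>
      exact (ModuleCat.isZero_of_subsingleton _).projective
  ε := ModuleCat.ofHom (Ideal.ofList ([] : List R)).mkQ
  hw := by
    rw [baseK_d]; exact zero_comp
  hsurj := Submodule.mkQ_surjective _
  hker z hz := by
    refine ⟨0, ?_⟩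
    have : z ∈ Ideal.ofList ([] : List R) := (Submodule.Quotient.mk_eq_zero _).1 hz
    rw [Ideal.ofList_nil] at this
    rw [map_zero]
    have h' : (0:R) = z := by simpa using this.symm
    exact h'
  hexact n z hz := ⟨0, by rw [map_zero]; exact (Subsingleton.elim _ _)⟩
  bound i hi := by
    match i, hi with
    | (n+1), _ => exact ModuleCat.isZero_of_subsingleton _
  min i := by
    rw [baseK_d]
    rintro _ ⟨y, rfl⟩
    exact Submodule.zero_mem _
  top := ⟨LinearEquiv.refl R R⟩

end Helpers

section Step
variable {R : Type} [CommRing R] [IsLocalRing R]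

/-- The connecting quotient map. -/
noncomputable def qmap (ys : List R) (x : R) :
    (R ⧸ Ideal.ofList ys) →ₗ[R] (R ⧸ Ideal.ofList (ys ++ [x])) :=
  Submodule.mapQ _ _ LinearMap.id (by
    intro z hz
    show (z : R) ∈ Ideal.ofList (ys ++ [x])
    rw [Ideal.ofList_append]
    exact Ideal.mem_sup_left hz)

lemma qmap_mk (ys : List R) (x : R) (r : R) :
    qmap ys x (Submodule.Quotient.mk r) = Submodule.Quotient.mk r :=
  Submodule.mapQ_apply _ _ _ r

lemma qmap_surjective (ys : List R) (x : R) : Function.Surjective (qmap ys x) := by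
  intro z
  obtain ⟨r, rfl⟩ := Submodule.Quotient.mk_surjective _ z
  exact ⟨Submodule.Quotient.mk r, qmap_mk ys x r⟩

lemma qmap_x_smul (ys : List R) (x : R) (b : R ⧸ Ideal.ofList ys) :
    qmap ys x (x • b) = 0 := by
  obtain ⟨r, rfl⟩ := Submodule.Quotient.mk_surjective _ b
  rw [← Submodule.Quotient.mk_smul, qmap_mk]
  rw [Submodule.Quotient.mk_eq_zero, Ideal.ofList_append]
  refine Ideal.mem_sup_right ?_
  rw [Ideal.ofList_singleton, Ideal.mem_span_singleton]
  exact ⟨r, rfl⟩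

lemma qmap_ker (ys : List R) (x : R) (z : R ⧸ Ideal.ofList ys)
    (hz : qmap ys x z = 0) : ∃ b, x • b = z := by
  obtain ⟨r, rfl⟩ := Submodule.Quotient.mk_surjective _ z
  rw [qmap_mk, Submodule.Quotient.mk_eq_zero, Ideal.ofList_append] at hz
  obtain ⟨a, ha, c, hc, rfl⟩ := Submodule.mem_sup.1 hz
  rw [Ideal.ofList_singleton, Ideal.mem_span_singleton] at hc
  obtain ⟨t, rfl⟩ := hc
  refine ⟨Submodule.Quotient.mk t, ?_⟩
  rw [← Submodule.Quotient.mk_smul, smul_eq_mul]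
  have heq : x*t - (a + x*t) = -a := by ring
  rw [Submodule.Quotient.eq, heq]
  exact neg_mem ha

lemma GR.eps_d {ys : List R} (G : GR R ys) (p : G.K.X 1) :
    G.ε (G.K.d 1 0 p) = 0 := by
  have h := G.hw
  calc G.ε (G.K.d 1 0 p) = (G.K.d 1 0 ≫ G.ε) p := rfl
  _ = (0 : G.K.X 1 ⟶ _) p := by rw [h]
  _ = 0 := rfl

lemma subsingleton_of_isZero {M : ModuleCat.{0} R} (h : IsZero M) : Subsingleton M :=
  ⟨fun a b => by rw [eq_zero_of_isZero h a, eq_zero_of_isZero h b]⟩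

lemma prod_mem_smul {A B : Type} [AddCommGroup A] [AddCommGroup B] [Module R A] [Module R B]
    (I : Ideal R) {u : A} {v : B} (hu : u ∈ (I • ⊤ : Submodule R A))
    (hv : v ∈ (I • ⊤ : Submodule R B)) : (u, v) ∈ (I • ⊤ : Submodule R (A × B)) := by
  have h1 : ((u, (0:B)) : A × B) ∈ (I • ⊤ : Submodule R (A × B)) := by
    have : ((u, (0:B)) : A × B) = LinearMap.inl R A B u := rfl
    rw [this]
    have := Submodule.mem_map_of_mem (f := LinearMap.inl R A B) hu
    rw [Submodule.map_smul''] at this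
    exact Submodule.smul_mono le_rfl le_top this
  have h2 : (((0:A), v) : A × B) ∈ (I • ⊤ : Submodule R (A × B)) := by
    have : (((0:A), v) : A × B) = LinearMap.inr R A B v := rfl
    rw [this]
    have := Submodule.mem_map_of_mem (f := LinearMap.inr R A B) hv
    rw [Submodule.map_smul''] at this
    exact Submodule.smul_mono le_rfl le_top this
  have : ((u, v) : A × B) = (u, 0) + (0, v) := by simp
  rw [this]
  exact Submodule.add_mem _ h1 h2


lemma GR.hker' {ys : List R} (G : GR R ys) (x : R) (z : G.K.X 0)
    (hz : qmap ys x (G.ε z) = 0) :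
    ∃ (a : G.K.X 1) (b0 : G.K.X 0), G.K.d 1 0 a + x • b0 = z := by
  obtain ⟨b, hb⟩ := qmap_ker ys x (G.ε z) hz
  obtain ⟨b0, rfl⟩ := G.hsurj b
  have h1 : G.ε (z - x • b0) = 0 := by
    rw [map_sub, map_smul, hb, sub_self]
  obtain ⟨a, ha⟩ := G.hker _ h1
  refine ⟨a, b0, ?_⟩
  rw [ha]
  abel

lemma GR.step_exact0 {ys : List R} (G : GR R ys) (x : R)
    (hx : IsSMulRegular (R ⧸ Ideal.ofList ys) x)
    (a : G.K.X 1) (b : G.K.X 0) (h : G.K.d 1 0 a + x • b = 0) :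
    ∃ (u : G.K.X 2) (v : G.K.X 1),
      (G.K.d 2 1 u + ((-1:R)^1 * x) • v = a) ∧ G.K.d 1 0 v = b := by
  have hb : x • G.ε b = 0 := by
    have : G.ε (G.K.d 1 0 a + x • b) = 0 := by rw [h, map_zero]
    rw [map_add, map_smul, G.eps_d, zero_add] at this
    exact this
  have hb0 : G.ε b = 0 := hx (by show x • G.ε b = x • 0; rw [hb, smul_zero])
  obtain ⟨v, hv⟩ := G.hker b hb0
  have hav : G.K.d 1 0 (a + x • v) = 0 := by
    rw [map_add, map_smul, hv, h]
  obtain ⟨u, hu⟩ := G.hexact 0 _ hav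
  refine ⟨u, v, ?_, hv⟩
  rw [hu]
  have : ((-1:R)^1 * x) = -x := by ring
  rw [this]
  module

lemma GR.step_exactS {ys : List R} (G : GR R ys) (x : R) (n : ℕ)
    (a : G.K.X (n+2)) (b : G.K.X (n+1))
    (h1 : G.K.d (n+2) (n+1) a + ((-1:R)^(n+1) * x) • b = 0)
    (h2 : G.K.d (n+1) n b = 0) :
    ∃ (u : G.K.X (n+3)) (v : G.K.X (n+2)),
      (G.K.d (n+3) (n+2) u + ((-1:R)^(n+2) * x) • v = a) ∧ G.K.d (n+2) (n+1) v = b := by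
  obtain ⟨v, hv⟩ := G.hexact n b h2
  have hav : G.K.d (n+2) (n+1) (a + ((-1:R)^(n+1) * x) • v) = 0 := by
    rw [map_add, map_smul, hv, h1]
  obtain ⟨u, hu⟩ := G.hexact (n+1) _ hav
  refine ⟨u, v, ?_, hv⟩
  rw [hu]
  have : ((-1:R)^(n+2)) = -((-1:R)^(n+1)) := by ring
  rw [this]
  module

/-- The inductive step: extend a resolution by one regular element. -/
noncomputable def GR.step {ys : List R} (G : GR R ys) (x : R)
    (hx : IsSMulRegular (R ⧸ Ideal.ofList ys) x)
    (hxm : x ∈ IsLocalRing.maximalIdeal R) : GR R (ys ++ [x]) where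
  K := cone G.K x
  proj n := by
    match n with
    | 0 => exact G.proj 0
    | n+1 =>
      have h1 : Module.Projective R (G.K.X (n+1)) := (IsProjective.iff_projective _).2 (G.proj (n+1))
      have h2 : Module.Projective R (G.K.X n) := (IsProjective.iff_projective _).2 (G.proj n)
      have h3 : Module.Projective R ((G.K.X (n+1)) × (G.K.X n)) := inferInstance
      exact (IsProjective.iff_projective _).1 h3
  ε := ModuleCat.ofHom ((qmap ys x) ∘ₗ G.ε.hom)
  hw := by
    rw [cone_d]
    apply ModuleCat.hom_ext
    apply LinearMap.ext
    rintro ⟨p, q0⟩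
    show qmap ys x (G.ε (G.K.d 1 0 p + x • q0)) = 0
    rw [map_add, map_smul, G.eps_d, map_add, map_zero, zero_add]
    exact qmap_x_smul ys x _
  hsurj := (qmap_surjective ys x).comp G.hsurj
  hker := by
    intro z hz
    obtain ⟨a, b0, h⟩ := GR.hker' G x z hz
    refine ⟨(a, b0), ?_⟩
    rw [cone_d]
    exact h
  hexact := by
    intro n z hz
    rw [cone_d] at hz
    match n, z, hz with
    | 0, (a, b), hz =>
      have h : G.K.d 1 0 a + x • b = 0 := hz
      obtain ⟨u, v, h1, h2⟩ := GR.step_exact0 G x hx a b h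
      refine ⟨(u, v), ?_⟩
      rw [cone_d]
      show (G.K.d 2 1 u + ((-1:R)^(0+1) * x) • v, G.K.d 1 0 v) = (a, b)
      exact Prod.ext h1 h2
    | (n+1), (a, b), hz =>
      have h1 : G.K.d (n+2) (n+1) a + ((-1:R)^(n+1) * x) • b = 0 :=
        congrArg Prod.fst hz
      have h2 : G.K.d (n+1) n b = 0 := congrArg Prod.snd hz
      obtain ⟨u, v, hu, hv⟩ := GR.step_exactS G x n a b h1 h2
      refine ⟨(u, v), ?_⟩
      rw [cone_d]
      show (G.K.d (n+3) (n+2) u + ((-1:R)^(n+2) * x) • v, G.K.d (n+2) (n+1) v) = (a, b)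
      exact Prod.ext hu hv
  bound := by
    intro i hi
    match i, hi with
    | (j+1), hi =>
      have hz1 : IsZero (G.K.X (j+1)) := G.bound (j+1) (by
        simp at hi; omega)
      have hz2 : IsZero (G.K.X j) := G.bound j (by simp at hi; omega)
      haveI := subsingleton_of_isZero hz1
      haveI := subsingleton_of_isZero hz2
      have hss : Subsingleton ((G.K.X (j+1)) × (G.K.X j)) := inferInstance
      haveI : Subsingleton ((cone G.K x).X (j+1)) := hss
      exact ModuleCat.isZero_of_subsingleton _
  min := by
    intro i
    rw [cone_d]
    rintro _ ⟨w, rfl⟩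
    match i, w with
    | 0, (p, q0) =>
      show G.K.d 1 0 p + x • q0 ∈ (IsLocalRing.maximalIdeal R • ⊤ : Submodule R (G.K.X 0))
      refine Submodule.add_mem _ (G.min 0 ⟨p, rfl⟩) ?_
      exact Submodule.smul_mem_smul hxm Submodule.mem_top
    | (n+1), (p, q0) =>
      show (G.K.d (n+2) (n+1) p + ((-1:R)^(n+1) * x) • q0, G.K.d (n+1) n q0)
          ∈ (IsLocalRing.maximalIdeal R • ⊤ : Submodule R ((G.K.X (n+1)) × (G.K.X n)))
      refine prod_mem_smul _ ?_ ?_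
      · refine Submodule.add_mem _ (G.min (n+1) ⟨p, rfl⟩) ?_
        exact Submodule.smul_mem_smul (Ideal.mul_mem_left _ _ hxm) Submodule.mem_top
      · exact G.min n ⟨q0, rfl⟩
  top := by
    have hlen : (ys ++ [x]).length = ys.length + 1 := by simp
    rw [hlen]
    obtain ⟨e⟩ := G.top
    haveI := subsingleton_of_isZero (G.bound (ys.length + 1) (by omega))
    refine ⟨?_⟩
    show ((G.K.X (ys.length+1)) × (G.K.X ys.length)) ≃ₗ[R] R
    have e2 : ((G.K.X (ys.length+1)) × (G.K.X ys.length)) ≃ₗ[R] (G.K.X ys.length) :=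
      LinearEquiv.ofLinear (LinearMap.snd R _ _) (LinearMap.inr R _ _)
        (by apply LinearMap.ext; intro b; rfl)
        (by apply LinearMap.ext; rintro ⟨a, b⟩; exact Prod.ext (Subsingleton.elim _ _) rfl)
    exact e2.trans e

end Step

section Assembly
variable {R : Type} [CommRing R] [IsLocalRing R]

lemma smul_top_ideal (I : Ideal R) : (I • ⊤ : Submodule R R) = I := by
  rw [smul_eq_mul, Ideal.mul_top]

/-- Build a `GR` for any weakly regular sequence inside the maximal ideal. -/
noncomputable def GR.ofList : ∀ (xs : List R), RingTheory.Sequence.IsWeaklyRegular R xs →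
    (∀ r ∈ xs, r ∈ IsLocalRing.maximalIdeal R) → GR R xs := fun xs =>
  xs.reverseRecOn (motive := fun xs => RingTheory.Sequence.IsWeaklyRegular R xs →
      (∀ r ∈ xs, r ∈ IsLocalRing.maximalIdeal R) → GR R xs)
    (fun _ _ => GR.nil R)
    (fun ys x ih hreg hmem => by
      have hlen : (ys ++ [x]).length = ys.length + 1 := by simp
      have hys : RingTheory.Sequence.IsWeaklyRegular R ys := by
        constructor
        intro i hi
        have h := hreg.regular_mod_prev i (by simp; omega)
        rwa [List.take_append_of_le_length (by omega),
          List.getElem_append_left (by omega)] at h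
      have hx : IsSMulRegular (R ⧸ Ideal.ofList ys) x := by
        have h := hreg.regular_mod_prev ys.length (by omega)
        rw [List.take_append_of_le_length (by omega), List.take_length] at h
        rw [List.getElem_append_right (by omega)] at h
        simp only [Nat.sub_self] at h
        rw [smul_top_ideal] at h
        simpa using h
      exact (ih hys (fun r hr => hmem r (by simp [hr]))).step x hx
        (hmem x (by simp)))

lemma GR.res_complex {xs : List R} (G : GR R xs) : (G.res).complex = G.K := rfl

lemma smul_kappa {r : R} (hr : r ∈ IsLocalRing.maximalIdeal R)
    (c : R ⧸ IsLocalRing.maximalIdeal R) : r • c = 0 := by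
  obtain ⟨s, rfl⟩ := Submodule.Quotient.mk_surjective _ c
  rw [← Submodule.Quotient.mk_smul, Submodule.Quotient.mk_eq_zero]
  exact Ideal.mul_mem_right s _ hr

lemma tmul_eq_zero_of_mem_smul {B : Type} [AddCommGroup B] [Module R B]
    (c : R ⧸ IsLocalRing.maximalIdeal R) {y : B}
    (hy : y ∈ (IsLocalRing.maximalIdeal R • ⊤ : Submodule R B)) :
    (c ⊗ₜ[R] y : TensorProduct R (R ⧸ IsLocalRing.maximalIdeal R) B) = 0 := by
  refine Submodule.smul_induction_on hy ?_ ?_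
  · intro r hr n _
    rw [TensorProduct.tmul_smul, TensorProduct.smul_tmul', smul_kappa hr,
      TensorProduct.zero_tmul]
  · intro y1 y2 h1 h2
    rw [TensorProduct.tmul_add, h1, h2, add_zero]

lemma whisker_eq_zero {A B : ModuleCat.{0} R} (f : A ⟶ B)
    (hf : LinearMap.range f.hom ≤
      (IsLocalRing.maximalIdeal R • ⊤ : Submodule R B)) :
    (tensorLeft (ModuleCat.of R (R ⧸ IsLocalRing.maximalIdeal R))).map f = 0 := by
  apply ModuleCat.hom_ext
  apply LinearMap.ext
  intro t
  show ((tensorLeft (ModuleCat.of R (R ⧸ IsLocalRing.maximalIdeal R))).map f) t = 0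
  refine TensorProduct.induction_on t rfl ?_ ?_
  · intro c a
    show (c ⊗ₜ[R] f a : TensorProduct R (R ⧸ IsLocalRing.maximalIdeal R) B) = 0
    exact tmul_eq_zero_of_mem_smul c (hf ⟨a, rfl⟩)
  · intro t1 t2 h1 h2
    rw [map_add, h1, h2, add_zero]

lemma homology_nonzero_aux (D : ChainComplex (ModuleCat.{0} R) ℕ) (j : ℕ)
    (h1 : D.d (j+2) (j+1) = 0) (h2 : D.d (j+1) j = 0)
    (hz : IsZero (D.homology (j+1))) : Subsingleton (D.X (j+1)) := by
  have hex : D.ExactAt (j+1) := (HomologicalComplex.exactAt_iff_isZero_homology _ _).2 hz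
  rw [HomologicalComplex.exactAt_iff' D (j+2) (j+1) j (by simp) (by simp),
    ShortComplex.moduleCat_exact_iff] at hex
  refine subsingleton_of_forall_eq 0 fun a => ?_
  obtain ⟨w, hw⟩ := hex a (show D.d (j+1) j a = 0 by rw [h2]; rfl)
  have hw' : D.d (j+2) (j+1) w = a := hw
  rw [h1] at hw'
  rw [← hw']
  rfl

/-- No resolution of length `< xs.length` exists. -/
lemma GR.lower {xs : List R} (G : GR R xs) (k : ℕ) (hk : k < xs.length)
    (P : ProjectiveResolution (ModuleCat.of R (R ⧸ Ideal.ofList xs)))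
    (hP : ∀ i, k < i → IsZero (P.complex.X i)) : False := by
  classical
  have hzero : IsZero (((tensorLeft (ModuleCat.of R (R ⧸ IsLocalRing.maximalIdeal R))).leftDerived
      xs.length).obj (ModuleCat.of R (R ⧸ Ideal.ofList xs))) := by
    refine IsZero.of_iso ?_ (P.isoLeftDerivedObj _ xs.length)
    show IsZero ((((tensorLeft (ModuleCat.of R (R ⧸ IsLocalRing.maximalIdeal R))).mapHomologicalComplex
      (ComplexShape.down ℕ)).obj P.complex).homology xs.length)
    rw [← HomologicalComplex.exactAt_iff_isZero_homology]
    apply ShortComplex.exact_of_isZero_X₂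
    show IsZero ((tensorLeft (ModuleCat.of R (R ⧸ IsLocalRing.maximalIdeal R))).obj
      (P.complex.X xs.length))
    exact Functor.map_isZero _ (hP xs.length hk)
  have h := G.res.isoLeftDerivedObj
    (tensorLeft (ModuleCat.of R (R ⧸ IsLocalRing.maximalIdeal R))) xs.length
  rw [GR.res_complex] at h
  have hzero2 : IsZero ((((tensorLeft (ModuleCat.of R (R ⧸ IsLocalRing.maximalIdeal R))).mapHomologicalComplex
      (ComplexShape.down ℕ)).obj G.K).homology xs.length) := IsZero.of_iso hzero h.symm
  obtain ⟨j, hj⟩ : ∃ j, xs.length = j + 1 := ⟨xs.length - 1, by omega⟩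
  rw [hj] at hzero2
  set D := ((tensorLeft (ModuleCat.of R (R ⧸ IsLocalRing.maximalIdeal R))).mapHomologicalComplex
      (ComplexShape.down ℕ)).obj G.K with hD
  have h1 : D.d (j+2) (j+1) = 0 := by
    rw [hD, Functor.mapHomologicalComplex_obj_d]
    exact whisker_eq_zero _ (G.min (j+1))
  have h2 : D.d (j+1) j = 0 := by
    rw [hD, Functor.mapHomologicalComplex_obj_d]
    exact whisker_eq_zero _ (G.min j)
  have hss : Subsingleton (D.X (j+1)) := homology_nonzero_aux D j h1 h2 hzero2
  rw [← hj] at hss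
  obtain ⟨e⟩ := G.top
  have E : TensorProduct R (R ⧸ IsLocalRing.maximalIdeal R) (G.K.X xs.length) ≃ₗ[R]
      (R ⧸ IsLocalRing.maximalIdeal R) :=
    (TensorProduct.congr (LinearEquiv.refl R _) e).trans (TensorProduct.rid R _)
  have hss2 : Subsingleton (TensorProduct R (R ⧸ IsLocalRing.maximalIdeal R)
      (G.K.X xs.length)) := hss
  haveI := hss2
  haveI : Subsingleton (R ⧸ IsLocalRing.maximalIdeal R) := E.symm.toEquiv.subsingleton
  haveI : Nontrivial (R ⧸ IsLocalRing.maximalIdeal R) :=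
    Ideal.Quotient.nontrivial_iff.mpr (Ideal.IsMaximal.ne_top (IsLocalRing.maximalIdeal.isMaximal R))
  exact false_of_nontrivial_of_subsingleton (R ⧸ IsLocalRing.maximalIdeal R)

end Assembly

/-- If `R` is a commutative Noetherian local ring and `I` is an ideal generated by a
regular sequence of length `m`, then the projective dimension of `R ⧸ I` over `R` is `m`. -/
theorem projDim_quotient_regular_sequence
    (R : Type) [CommRing R] [IsNoetherianRing R] [IsLocalRing R]
    (I : Ideal R) (m : ℕ) (rs : List R)
    (hreg : RingTheory.Sequence.IsRegular R rs)
    (hgen : Ideal.ofList rs = I) (hlen : rs.length = m) :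
    HasProjDimEq R (ModuleCat.of R (R ⧸ I)) m := by
  subst hgen
  subst hlen
  have hwr := hreg.toIsWeaklyRegular
  have hne : Ideal.ofList rs ≠ ⊤ := by
    have h := hreg.top_ne_smul
    rw [smul_top_ideal] at h
    exact h.symm
  have hmem : ∀ r ∈ rs, r ∈ IsLocalRing.maximalIdeal R := fun r hr =>
    IsLocalRing.le_maximalIdeal hne (Ideal.subset_span hr)
  have G := GR.ofList rs hwr hmem
  constructor
  · exact ⟨G.res, fun i hi => by rw [GR.res_complex]; exact G.bound i hi⟩
  · intro k hk h
    obtain ⟨P, hP⟩ := h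
    exact G.lower k hk P hP
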